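/- For every r > 0 and every C > 0 there exists R₀ > 0 such that: for every R ≥ R₀, every t ∈ ℂ, and every (x,y,z) ∈ ℂ³ satisfying x·y = P(z), |x| = R, |y| ≤ R^{1/d²} and |η_t(x,y,z)| ≤ r, one has |t| > C. (Equivalently, the quantities c_R = inf{|t| : ∃(x,y,z) ∈ X with |η_t(x,y,z)| ≤ r, |x| = R, |y| ≤ R^{1/d²}} tend to +∞ as R → ∞.) -/

import Mathlib

set_option maxHeartbeats 1000000

open Polynomial

/-- η_t(x,y,z) = (1/y)·P(z+yt) if y ≠ 0, and x + t·P′(z) if y = 0. -/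
noncomputable def eta (P : Polynomial ℂ) (t x y z : ℂ) : ℂ :=
  if y ≠ 0 then y⁻¹ * P.eval (z + y * t) else x + t * (Polynomial.derivative P).eval z

noncomputable def Complex.abs : AbsoluteValue ℂ ℝ := NormedField.toAbsoluteValue ℂ

theorem Complex.norm_eq_abs (z : ℂ) : ‖z‖ = Complex.abs z := rfl

lemma eval_abs_le (Q : Polynomial ℂ) (n : ℕ) (hn : Q.natDegree ≤ n) (u : ℂ) :
    Complex.abs (Q.eval u) ≤
      (∑ i ∈ Finset.range (n+1), Complex.abs (Q.coeff i)) * max 1 (Complex.abs u) ^ n := by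
  rw [Polynomial.eval_eq_sum_range' (Nat.lt_succ_of_le hn)]
  calc Complex.abs (∑ i ∈ Finset.range (n+1), Q.coeff i * u ^ i)
      ≤ ∑ i ∈ Finset.range (n+1), Complex.abs (Q.coeff i * u ^ i) :=
        Complex.abs.sum_le _ _
    _ ≤ ∑ i ∈ Finset.range (n+1), Complex.abs (Q.coeff i) * max 1 (Complex.abs u) ^ n := by
        apply Finset.sum_le_sum
        intro i hi
        rw [map_mul, map_pow]
        apply mul_le_mul_of_nonneg_left _ (AbsoluteValue.nonneg _ _)
        calc Complex.abs u ^ i ≤ max 1 (Complex.abs u) ^ i :=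
              pow_le_pow_left₀ (AbsoluteValue.nonneg _ _) (le_max_right _ _) i
          _ ≤ max 1 (Complex.abs u) ^ n :=
              pow_le_pow_right₀ (le_max_left _ _) (Nat.lt_succ_iff.mp (Finset.mem_range.mp hi))
    _ = _ := (Finset.sum_mul _ _ _).symm

lemma eval_abs_lower (P : Polynomial ℂ) (d : ℕ) (hd : 1 ≤ d) (hdeg : P.natDegree = d) (u : ℂ) :
    Complex.abs P.leadingCoeff * max 1 (Complex.abs u) ^ d ≤
      Complex.abs (P.eval u) +
        ((∑ i ∈ Finset.range d, Complex.abs (P.coeff i)) + Complex.abs P.leadingCoeff) *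
          max 1 (Complex.abs u) ^ (d-1) := by
  have hS : 0 ≤ ∑ i ∈ Finset.range d, Complex.abs (P.coeff i) :=
    Finset.sum_nonneg fun i _ => AbsoluteValue.nonneg _ _
  rcases le_total (Complex.abs u) 1 with h | h
  · rw [max_eq_left h, one_pow, one_pow, mul_one, mul_one]
    have := AbsoluteValue.nonneg Complex.abs (P.eval u)
    linarith
  · rw [max_eq_right h]
    have key : P.eval u = (∑ i ∈ Finset.range d, P.coeff i * u ^ i) + P.coeff d * u ^ d := by
      rw [Polynomial.eval_eq_sum_range' (by omega : P.natDegree < d + 1)]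
      exact Finset.sum_range_succ _ _
    have hlead : Complex.abs P.leadingCoeff * Complex.abs u ^ d
        = Complex.abs (P.coeff d * u ^ d) := by
      rw [map_mul, map_pow, Polynomial.leadingCoeff, hdeg]
    have h2 : Complex.abs (P.coeff d * u ^ d)
        ≤ Complex.abs (P.eval u) + Complex.abs (∑ i ∈ Finset.range d, P.coeff i * u ^ i) := by
      have : P.coeff d * u ^ d = P.eval u - ∑ i ∈ Finset.range d, P.coeff i * u ^ i := by
        rw [key]; ring
      rw [this]
      exact (Complex.abs.sub_le_add _ _)
    have h3 : Complex.abs (∑ i ∈ Finset.range d, P.coeff i * u ^ i)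
        ≤ (∑ i ∈ Finset.range d, Complex.abs (P.coeff i)) * Complex.abs u ^ (d-1) := by
      calc Complex.abs (∑ i ∈ Finset.range d, P.coeff i * u ^ i)
          ≤ ∑ i ∈ Finset.range d, Complex.abs (P.coeff i * u ^ i) := Complex.abs.sum_le _ _
        _ ≤ ∑ i ∈ Finset.range d, Complex.abs (P.coeff i) * Complex.abs u ^ (d-1) := by
            apply Finset.sum_le_sum
            intro i hi
            rw [map_mul, map_pow]
            apply mul_le_mul_of_nonneg_left _ (AbsoluteValue.nonneg _ _)
            exact pow_le_pow_right₀ h (by have := Finset.mem_range.mp hi; omega)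
        _ = _ := (Finset.sum_mul _ _ _).symm
    have h4 : 0 ≤ Complex.abs P.leadingCoeff * Complex.abs u ^ (d-1) := by positivity
    rw [add_mul]
    linarith [h2, h3, hlead, h4]

lemma max_abs_le (P : Polynomial ℂ) (d : ℕ) (hd : 1 ≤ d) (hdeg : P.natDegree = d)
    (u : ℂ) (V : ℝ) (hV : 1 ≤ V) (hPu : Complex.abs (P.eval u) ≤ V) :
    max 1 (Complex.abs u) ≤
      (2*((∑ i ∈ Finset.range d, Complex.abs (P.coeff i)) + Complex.abs P.leadingCoeff)
          / Complex.abs P.leadingCoeff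
        + (2 / Complex.abs P.leadingCoeff) ^ ((1:ℝ)/d)) * V ^ ((1:ℝ)/d) := by
  have hP0 : P ≠ 0 := by
    intro h; rw [h] at hdeg; simp at hdeg; omega
  set a := Complex.abs P.leadingCoeff with ha_def
  have ha : 0 < a := by
    simpa [ha_def, AbsoluteValue.pos_iff] using Polynomial.leadingCoeff_ne_zero.mpr hP0
  set S := ∑ i ∈ Finset.range d, Complex.abs (P.coeff i) with hS_def
  have hS : 0 ≤ S := Finset.sum_nonneg fun i _ => AbsoluteValue.nonneg _ _
  set m := max 1 (Complex.abs u) with hm_def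
  have hm1 : (1:ℝ) ≤ m := le_max_left _ _
  have hm0 : (0:ℝ) < m := by linarith
  have hVd : (1:ℝ) ≤ V ^ ((1:ℝ)/d) := by
    calc (1:ℝ) = 1 ^ ((1:ℝ)/d) := (Real.one_rpow _).symm
      _ ≤ V ^ ((1:ℝ)/d) := Real.rpow_le_rpow zero_le_one hV (by positivity)
  have hc2 : (0:ℝ) ≤ (2/a) ^ ((1:ℝ)/d) := Real.rpow_nonneg (by positivity) _
  have key : a * m ^ d ≤ V + (S + a) * m ^ (d-1) :=
    le_trans (eval_abs_lower P d hd hdeg u) (by nlinarith [pow_nonneg hm0.le (d-1), hPu])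
  rcases le_total m (2*(S+a)/a) with hcase | hcase
  · nlinarith
  · have hpow : m ^ d = m * m ^ (d-1) := by
      conv_lhs => rw [show d = (d-1) + 1 by omega]
      rw [pow_succ]; ring
    have h5 : (S + a) * m ^ (d-1) ≤ (a/2) * m ^ d := by
      rw [hpow]
      have h6 : 2*(S+a) ≤ a * m := by
        rw [div_le_iff₀ ha] at hcase; linarith
      nlinarith [pow_nonneg hm0.le (d-1)]
    have h7 : m ^ d ≤ (2/a) * V := by
      rw [div_mul_eq_mul_div, le_div_iff₀ ha]
      nlinarith
    have h8 : m ≤ ((2/a) * V) ^ ((1:ℝ)/d) := by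
      have h9 := Real.rpow_le_rpow (by positivity) h7 (by positivity : (0:ℝ) ≤ 1/(d:ℝ))
      rwa [← Real.rpow_natCast m d, ← Real.rpow_mul hm0.le,
        mul_one_div, div_self (by exact_mod_cast (by omega : d ≠ 0) : (d:ℝ) ≠ 0),
        Real.rpow_one] at h9
    rw [Real.mul_rpow (by positivity) (by linarith)] at h8
    nlinarith [div_nonneg (by linarith : (0:ℝ) ≤ 2*(S+a)) ha.le]

lemma mvt_poly (P : Polynomial ℂ) (z w : ℂ) (M : ℝ)
    (hM : ∀ u ∈ segment ℝ z w, Complex.abs ((Polynomial.derivative P).eval u) ≤ M) :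
    Complex.abs (P.eval w - P.eval z) ≤ M * Complex.abs (w - z) := by
  have hconv : Convex ℝ (segment ℝ z w) := convex_segment z w
  have hdiff : ∀ u ∈ segment ℝ z w, DifferentiableAt ℂ (fun x => P.eval x) u :=
    fun u _ => (P.hasDerivAt u).differentiableAt
  have hbound : ∀ u ∈ segment ℝ z w, ‖fderiv ℂ (fun x => P.eval x) u‖ ≤ M := by
    intro u hu
    have hD := (P.hasDerivAt u).hasFDerivAt.fderiv
    rw [hD, ContinuousLinearMap.norm_toSpanSingleton]
    exact hM u hu
  simpa [Complex.norm_eq_abs] using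
    hconv.norm_image_sub_le_of_norm_fderiv_le hdiff hbound
      (left_mem_segment ℝ z w) (right_mem_segment ℝ z w)

theorem stmt4 (P : Polynomial ℂ) (d : ℕ) (hd : 2 ≤ d) (hdeg : P.natDegree = d)
    (hsq : ∀ z : ℂ, ¬(P.eval z = 0 ∧ (Polynomial.derivative P).eval z = 0)) :
    ∀ r : ℝ, 0 < r → ∀ C : ℝ, 0 < C → ∃ R₀ : ℝ, 0 < R₀ ∧
      ∀ R : ℝ, R₀ ≤ R → ∀ t x y z : ℂ,
        x * y = P.eval z → ‖x‖ = R →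
        ‖y‖ ≤ R ^ ((1 : ℝ) / (d : ℝ) ^ 2) →
        ‖eta P t x y z‖ ≤ r → C < ‖t‖ := by
  simp only [Complex.norm_eq_abs]
  intro r hr C hC
  have hd1 : 1 ≤ d := by omega
  have hP0 : P ≠ 0 := by intro h; rw [h] at hdeg; simp at hdeg; omega
  obtain ⟨a, ha_def⟩ : ∃ a : ℝ, a = Complex.abs P.leadingCoeff := ⟨_, rfl⟩
  have ha : 0 < a := by
    rw [ha_def]; exact AbsoluteValue.pos _ (Polynomial.leadingCoeff_ne_zero.mpr hP0)
  obtain ⟨S, hS_def⟩ : ∃ S : ℝ, S = ∑ i ∈ Finset.range d, Complex.abs (P.coeff i) := ⟨_, rfl⟩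
  have hS : 0 ≤ S := by
    rw [hS_def]; exact Finset.sum_nonneg fun i _ => AbsoluteValue.nonneg _ _
  obtain ⟨c, hc_def⟩ : ∃ c : ℝ, c = 2*(S+a)/a + (2/a) ^ ((1:ℝ)/d) := ⟨_, rfl⟩
  have hc : 0 < c := by
    rw [hc_def]
    have h1 : (0:ℝ) < (2/a) ^ ((1:ℝ)/d) := Real.rpow_pos_of_pos (by positivity) _
    have h2 : (0:ℝ) ≤ 2*(S+a)/a := div_nonneg (by linarith) ha.le
    linarith
  obtain ⟨S', hS'_def⟩ : ∃ S' : ℝ,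
      S' = ∑ i ∈ Finset.range d, Complex.abs ((Polynomial.derivative P).coeff i) := ⟨_, rfl⟩
  have hS' : 0 < S' := by
    have hmem : d - 1 ∈ Finset.range d := Finset.mem_range.mpr (by omega)
    have hco : (Polynomial.derivative P).coeff (d-1) = P.coeff d * ((d-1 : ℕ) + 1 : ℂ) := by
      rw [Polynomial.coeff_derivative, show d - 1 + 1 = d from by omega]
    have hne : (Polynomial.derivative P).coeff (d-1) ≠ 0 := by
      rw [hco]
      apply mul_ne_zero
      · rw [← hdeg]; exact Polynomial.leadingCoeff_ne_zero.mpr hP0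
      · have h3 : ((d-1 : ℕ) + 1 : ℂ) = ((d : ℕ) : ℂ) := by
          push_cast [Nat.cast_sub hd1]; ring
        rw [h3]
        exact_mod_cast Nat.cast_ne_zero.mpr (by omega)
    rw [hS'_def]
    calc (0:ℝ) < Complex.abs ((Polynomial.derivative P).coeff (d-1)) :=
          AbsoluteValue.pos _ hne
      _ ≤ _ := Finset.single_le_sum
          (f := fun i => Complex.abs ((Polynomial.derivative P).coeff i))
          (fun i _ => AbsoluteValue.nonneg _ _) hmem
  obtain ⟨K, hK_def⟩ : ∃ K : ℝ, K = S' * c ^ (d-1) := ⟨_, rfl⟩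
  have hK : 0 < K := by rw [hK_def]; exact mul_pos hS' (pow_pos hc _)
  obtain ⟨β, hβ_def⟩ : ∃ β : ℝ, β = (1:ℝ) / (d:ℝ)^2 := ⟨_, rfl⟩
  obtain ⟨α, hα_def⟩ : ∃ α : ℝ, α = ((1:ℝ) + β)/(d:ℝ) * ((d:ℝ) - 1) := ⟨_, rfl⟩
  have hD2 : (2:ℝ) ≤ (d:ℝ) := by exact_mod_cast hd
  have hD0 : (0:ℝ) < (d:ℝ) := by linarith
  have hα1 : α < 1 := by
    have hαeq : α = ((d:ℝ)^2+1)*((d:ℝ)-1)/(d:ℝ)^3 := by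
      have hd0 : (d:ℝ) ≠ 0 := ne_of_gt hD0
      rw [hα_def, hβ_def]
      field_simp
    rw [hαeq, div_lt_one (by positivity)]
    nlinarith only [hD2, sq_nonneg ((d:ℝ) - 1)]
  obtain ⟨δ, hδ_def⟩ : ∃ δ : ℝ, δ = 1/(2*C*K) := ⟨_, rfl⟩
  have hδ : 0 < δ := by
    rw [hδ_def]
    apply one_div_pos.mpr
    nlinarith only [mul_pos hC hK]
  have htend : Filter.Tendsto (fun R : ℝ => R ^ (α - 1)) Filter.atTop (nhds 0) := by
    have h4 := tendsto_rpow_neg_atTop (y := 1 - α) (by linarith)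
    simpa [neg_sub] using h4
  have hev : ∀ᶠ R in Filter.atTop,
      (1 ≤ R ∧ r ≤ R ∧ 2*r+1 ≤ R ∧ R ^ (α - 1) ≤ δ) := by
    filter_upwards [Filter.eventually_ge_atTop (1:ℝ), Filter.eventually_ge_atTop r,
      Filter.eventually_ge_atTop (2*r+1), htend.eventually (eventually_le_nhds hδ)] with
      R h1 h2 h3 h4
    exact ⟨h1, h2, h3, h4⟩
  rw [Filter.eventually_atTop] at hev
  obtain ⟨R₀, hR₀⟩ := hev
  refine ⟨max R₀ 1, lt_of_lt_of_le one_pos (le_max_right _ _), ?_⟩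
  intro R hRge t x y z hxy hxR hyR heta
  rw [← hβ_def] at hyR
  obtain ⟨hR1, hRr, hR2r, hRδ⟩ := hR₀ R (le_trans (le_max_left _ _) hRge)
  have hR0 : (0:ℝ) < R := lt_of_lt_of_le one_pos hR1
  obtain ⟨V, hV_def⟩ : ∃ V : ℝ, V = R ^ ((1:ℝ) + β) := ⟨_, rfl⟩
  have hV1 : 1 ≤ V := by rw [hV_def]; exact Real.one_le_rpow hR1 (by rw [hβ_def]; positivity)
  obtain ⟨Vd, hVd_def⟩ : ∃ Vd : ℝ, Vd = V ^ ((1:ℝ)/(d:ℝ)) := ⟨_, rfl⟩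
  have hVd1 : 1 ≤ Vd := by rw [hVd_def]; exact Real.one_le_rpow hV1 (by positivity)
  have hVd0 : 0 < Vd := lt_of_lt_of_le one_pos hVd1
  obtain ⟨W, hW_def⟩ : ∃ W : ℝ, W = K * Vd ^ (d-1) := ⟨_, rfl⟩
  have hW : 0 < W := by rw [hW_def]; exact mul_pos hK (pow_pos hVd0 _)
  -- Claim 1 : C * W < R - r
  have claim1 : C * W < R - r := by
    have hVdpow : Vd ^ (d-1) = R ^ α := by
      rw [hVd_def, hV_def, ← Real.rpow_mul hR0.le,
        ← Real.rpow_natCast (R ^ (((1:ℝ) + β) * ((1:ℝ)/(d:ℝ)))) (d-1),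
        ← Real.rpow_mul hR0.le]
      congr 1
      rw [hα_def]
      push_cast [Nat.cast_sub hd1]
      ring
    have hRα : R ^ α ≤ δ * R := by
      have h5 : R ^ (α - 1) * R = R ^ α := by
        rw [← Real.rpow_add_one hR0.ne' (α - 1)]
        norm_num
      rw [← h5]
      exact mul_le_mul_of_nonneg_right hRδ hR0.le
    have hCKδ : C * K * δ = 1/2 := by
      rw [hδ_def]
      field_simp
    calc C * W = C * K * (Vd ^ (d-1)) := by rw [hW_def]; ring
      _ ≤ C * K * (δ * R) := by
          apply mul_le_mul_of_nonneg_left _ (mul_pos hC hK).le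
          rw [hVdpow]; exact hRα
      _ = 1/2 * R := by rw [← mul_assoc, hCKδ]
      _ < R - r := by linarith
  -- eval bound for the derivative
  have hderiv_bound : ∀ u : ℂ,
      Complex.abs ((Polynomial.derivative P).eval u) ≤ S' * max 1 (Complex.abs u) ^ (d-1) := by
    intro u
    have hle := eval_abs_le (Polynomial.derivative P) (d-1)
      (le_trans (Polynomial.natDegree_derivative_le P) (by rw [hdeg])) u
    have h6 : d - 1 + 1 = d := by omega
    rwa [h6, ← hS'_def] at hle
  -- Claim 2 : R - r ≤ |t| * W
  have claim2 : R - r ≤ Complex.abs t * W := by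
    by_cases hy : y = 0
    · -- boundary case
      have heq : _root_.eta P t x y z = x + t * (Polynomial.derivative P).eval z := by
        simp [_root_.eta, hy]
      rw [heq] at heta
      have hPz : P.eval z = 0 := by rw [← hxy, hy, mul_zero]
      have h1 : R - r ≤ Complex.abs (t * (Polynomial.derivative P).eval z) := by
        have htri : Complex.abs x ≤ Complex.abs (x + t * (Polynomial.derivative P).eval z)
            + Complex.abs (t * (Polynomial.derivative P).eval z) := by
          calc Complex.abs x
              = Complex.abs ((x + t * (Polynomial.derivative P).eval z)
                - t * (Polynomial.derivative P).eval z) := by ring_nf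
            _ ≤ _ := Complex.abs.sub_le_add _ _
        rw [hxR] at htri
        linarith only [htri, heta]
      have h2 : Complex.abs ((Polynomial.derivative P).eval z) ≤ W := by
        have hmz := max_abs_le P d hd1 hdeg z 1 le_rfl (by rw [hPz]; simp)
        rw [Real.one_rpow, mul_one, ← ha_def, ← hS_def, ← hc_def] at hmz
        calc Complex.abs ((Polynomial.derivative P).eval z)
            ≤ S' * max 1 (Complex.abs z) ^ (d-1) := hderiv_bound z
          _ ≤ S' * c ^ (d-1) := by
              apply mul_le_mul_of_nonneg_left _ hS'.le
              exact pow_le_pow_left₀ (le_trans zero_le_one (le_max_left _ _)) hmz _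
          _ = K := by rw [hK_def]
          _ ≤ W := by
              rw [hW_def]
              exact le_mul_of_one_le_right hK.le (one_le_pow₀ hVd1)
      rw [map_mul] at h1
      calc R - r ≤ Complex.abs t * Complex.abs ((Polynomial.derivative P).eval z) := h1
        _ ≤ Complex.abs t * W := mul_le_mul_of_nonneg_left h2 (AbsoluteValue.nonneg _ _)
    · -- generic case
      have heq : _root_.eta P t x y z = y⁻¹ * P.eval (z + y * t) := by
        simp [_root_.eta, hy]
      rw [heq] at heta
      obtain ⟨w, hw_def⟩ : ∃ w : ℂ, w = z + y * t := ⟨_, rfl⟩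
      rw [← hw_def] at heta
      have hy0 : 0 < Complex.abs y := AbsoluteValue.pos _ hy
      have hPw : Complex.abs (P.eval w) ≤ r * Complex.abs y := by
        rw [map_mul, map_inv₀] at heta
        have h7 : Complex.abs (P.eval w) / Complex.abs y ≤ r := by
          rw [div_eq_inv_mul]; exact heta
        linarith [(div_le_iff₀ hy0).mp h7]
      have hPz : Complex.abs (P.eval z) = R * Complex.abs y := by
        rw [← hxy, map_mul, hxR]
      have hVsplit : V = R * R ^ β := by
        rw [hV_def, Real.rpow_add hR0, Real.rpow_one]
      have hVz : Complex.abs (P.eval z) ≤ V := by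
        rw [hPz, hVsplit]
        exact mul_le_mul_of_nonneg_left hyR hR0.le
      have hVw : Complex.abs (P.eval w) ≤ V := by
        rw [hVsplit]
        calc Complex.abs (P.eval w) ≤ r * Complex.abs y := hPw
          _ ≤ R * R ^ β := mul_le_mul hRr hyR (AbsoluteValue.nonneg _ _) hR0.le
      have hmz := max_abs_le P d hd1 hdeg z V hV1 hVz
      have hmw := max_abs_le P d hd1 hdeg w V hV1 hVw
      rw [← ha_def, ← hS_def, ← hc_def, ← hVd_def] at hmz hmw
      have hseg : ∀ u ∈ segment ℝ z w,
          Complex.abs ((Polynomial.derivative P).eval u) ≤ W := by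
        intro u hu
        have humax : max 1 (Complex.abs u) ≤ c * Vd := by
          obtain ⟨p, q, hp, hq, hpq, rfl⟩ := hu
          have habs : Complex.abs (p • z + q • w)
              ≤ p * Complex.abs z + q * Complex.abs w := by
            calc Complex.abs (p • z + q • w)
                ≤ Complex.abs (p • z) + Complex.abs (q • w) := Complex.abs.add_le _ _
              _ = p * Complex.abs z + q * Complex.abs w := by
                  rw [← Complex.norm_eq_abs, ← Complex.norm_eq_abs, ← Complex.norm_eq_abs,
                    ← Complex.norm_eq_abs, norm_smul, norm_smul, Real.norm_eq_abs,
                    Real.norm_eq_abs, abs_of_nonneg hp, abs_of_nonneg hq]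
          apply max_le (le_trans (le_max_left 1 (Complex.abs z)) hmz)
          have hz' : Complex.abs z ≤ c * Vd := le_trans (le_max_right _ _) hmz
          have hw' : Complex.abs w ≤ c * Vd := le_trans (le_max_right _ _) hmw
          have hmul1 : p * Complex.abs z ≤ p * (c * Vd) :=
            mul_le_mul_of_nonneg_left hz' hp
          have hmul2 : q * Complex.abs w ≤ q * (c * Vd) :=
            mul_le_mul_of_nonneg_left hw' hq
          have heq2 : p * (c * Vd) + q * (c * Vd) = c * Vd := by
            rw [← add_mul, hpq, one_mul]
          linarith only [habs, hmul1, hmul2, heq2]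
        calc Complex.abs ((Polynomial.derivative P).eval u)
            ≤ S' * max 1 (Complex.abs u) ^ (d-1) := hderiv_bound u
          _ ≤ S' * (c * Vd) ^ (d-1) := by
              apply mul_le_mul_of_nonneg_left _ hS'.le
              exact pow_le_pow_left₀ (le_trans zero_le_one (le_max_left _ _)) humax _
          _ = W := by rw [hW_def, hK_def, mul_pow]; ring
      have hmvt := mvt_poly P z w W hseg
      have hwz : Complex.abs (w - z) = Complex.abs y * Complex.abs t := by
        rw [show w - z = y * t by rw [hw_def]; ring, map_mul]
      have hlow : (R - r) * Complex.abs y ≤ Complex.abs (P.eval w - P.eval z) := by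
        have htri : Complex.abs (P.eval z)
            ≤ Complex.abs (P.eval w - P.eval z) + Complex.abs (P.eval w) := by
          calc Complex.abs (P.eval z)
              = Complex.abs ((P.eval w - P.eval z) - P.eval w) := by
                rw [show (P.eval w - P.eval z) - P.eval w = -(P.eval z) by ring, Complex.abs.map_neg]
            _ ≤ _ := Complex.abs.sub_le_add _ _
        rw [hPz] at htri
        have hsub : (R - r) * Complex.abs y = R * Complex.abs y - r * Complex.abs y := by ring
        linarith only [htri, hPw, hsub]
      have hfinal : (R - r) * Complex.abs y ≤ (Complex.abs t * W) * Complex.abs y := by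
        calc (R - r) * Complex.abs y ≤ Complex.abs (P.eval w - P.eval z) := hlow
          _ ≤ W * Complex.abs (w - z) := hmvt
          _ = (Complex.abs t * W) * Complex.abs y := by rw [hwz]; ring
      exact le_of_mul_le_mul_right hfinal hy0
  exact lt_of_mul_lt_mul_right (lt_of_lt_of_le claim1 claim2) hW.le
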